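/- arXiv:1601.08042 — 2 statements merged into one kernel-verified Lean document; each statement's English description precedes it below -/
import Mathlib

section
/- Let f be an entire function such that |f(z)| ≤ C e^{|z|} for all z ∈ ℂ and |f(x)| ≤ C for all real x. Then |f(z)| ≤ C' e^{|Im z|} for all z ∈ ℂ, for some constant C'. -/
open Complex Set Asymptotics Filter

private lemma aux_upper (f : ℂ → ℂ) (hf : Differentiable ℂ f) (C : ℝ) (hC : 0 ≤ C)
    (hgrowth : ∀ z : ℂ, ‖f z‖ ≤ C * Real.exp ‖z‖)
    (hreal : ∀ x : ℝ, ‖f x‖ ≤ C) (z : ℂ) (hz : 0 ≤ z.im) :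
    ‖f z‖ ≤ C * Real.exp z.im := by
  set g : ℂ → ℂ := fun z => f z * Complex.exp (I * z) with hg
  have hgnorm : ∀ w : ℂ, ‖g w‖ = ‖f w‖ * Real.exp (-w.im) := fun w => by
    rw [hg]
    simp only
    rw [norm_mul]
    congr 1
    rw [Complex.norm_exp]
    congr 1
    simp [Complex.mul_re]
  have hd : Differentiable ℂ g := hf.mul (by fun_prop)
  have hO : ∀ (s : Set ℂ), g =O[Bornology.cobounded ℂ ⊓ 𝓟 s]
      fun z => Real.exp ((2 : ℝ) * ‖z‖ ^ (1 : ℝ)) := by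
    intro s
    refine IsBigO.of_bound C (Eventually.of_forall fun w => ?_)
    rw [hgnorm, Real.norm_eq_abs, Real.abs_exp, Real.rpow_one]
    have h1 : ‖f w‖ * Real.exp (-w.im) ≤ C * Real.exp ‖w‖ * Real.exp (-w.im) := by
      gcongr; exact hgrowth w
    refine h1.trans ?_
    rw [mul_assoc, ← Real.exp_add, two_mul]
    have heq : (‖w‖ : ℝ) = ‖w‖ := rfl
    have h2 : ‖w‖ + -w.im ≤ ‖w‖ + ‖w‖ := by
      have h3 : |w.im| ≤ ‖w‖ := Complex.abs_im_le_norm w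
      have h4 : -w.im ≤ |w.im| := neg_le_abs w.im
      rw [heq]; linarith
    exact mul_le_mul_of_nonneg_left (Real.exp_le_exp.2 h2) hC
  have hre : ∀ x : ℝ, ‖g x‖ ≤ C := fun x => by
    rw [hgnorm]; simpa using hreal x
  have him : ∀ x : ℝ, 0 ≤ x → ‖g (x * I)‖ ≤ C := fun x hx => by
    have himval : ((x : ℂ) * I).im = x := by simp
    rw [hgnorm, himval]
    have hfx : ‖f (x * I)‖ ≤ C * Real.exp x := by
      have h := hgrowth (x * I)
      have : ‖(x : ℂ) * I‖ = x := by
        simp [norm_mul, _root_.abs_of_nonneg hx]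
      rwa [this] at h
    calc ‖f (↑x * I)‖ * Real.exp (-x)
        ≤ C * Real.exp x * Real.exp (-x) := by gcongr
      _ = C := by rw [mul_assoc, ← Real.exp_add, add_neg_cancel, Real.exp_zero, mul_one]
  have key : ‖g z‖ ≤ C := by
    rcases le_or_gt 0 z.re with hre' | hre'
    · exact PhragmenLindelof.quadrant_I (hd.diffContOnCl)
        ⟨1, one_lt_two, 2, hO _⟩ (fun x _ => hre x) him hre' hz
    · exact PhragmenLindelof.quadrant_II (hd.diffContOnCl)
        ⟨1, one_lt_two, 2, hO _⟩ (fun x _ => hre x) him hre'.le hz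
  rw [hgnorm] at key
  have h5 := mul_le_mul_of_nonneg_right key (Real.exp_pos z.im).le
  rwa [mul_assoc, ← Real.exp_add, neg_add_cancel, Real.exp_zero, mul_one] at h5

theorem stmt_7 (f : ℂ → ℂ) (hf : Differentiable ℂ f) (C : ℝ)
    (hgrowth : ∀ z : ℂ, ‖f z‖ ≤ C * Real.exp ‖z‖)
    (hreal : ∀ x : ℝ, ‖f x‖ ≤ C) :
    ∃ C' : ℝ, ∀ z : ℂ, ‖f z‖ ≤ C' * Real.exp |z.im| := by
  have hC : 0 ≤ C := (norm_nonneg _).trans (hreal 0)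
  refine ⟨C, fun z => ?_⟩
  rcases le_or_gt 0 z.im with hz | hz
  · rw [_root_.abs_of_nonneg hz]
    exact aux_upper f hf C hC hgrowth hreal z hz
  · rw [_root_.abs_of_neg hz]
    have h2 : ∀ x : ℝ, ‖(fun w => f (-w)) (x : ℂ)‖ ≤ C := fun x => by
      simpa [← Complex.ofReal_neg] using hreal (-x)
    have := aux_upper (fun w => f (-w)) (hf.comp differentiable_neg) C hC
      (fun w => by simpa using hgrowth (-w)) h2 (-z) (by simp; linarith)
    simpa using this
end

section
/- Let M be a finite nonnegative Borel measure on ℝ with support in [-1,1] and M({1}) > 0. Then the indicator function u = 1_{{1}} (which equals 1 at μ=1 and 0 elsewhere) lies in L²(M), and u cannot be approximated in L²(M) by functions v for which the moment sequence v_n = ∫ v(μ)μ^n dM(μ) is square-summable. -/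
open MeasureTheory Set Filter Topology

theorem stmt_12 (M : Measure ℝ) [IsFiniteMeasure M]
    (hsupp : M (Icc (-1 : ℝ) 1)ᶜ = 0)
    (h1 : 0 < M {(1 : ℝ)})
    (u : ℝ → ℂ) (hu : u = Set.indicator {(1 : ℝ)} (fun _ => (1 : ℂ))) :
    MemLp u 2 M ∧
    ∀ v : ℝ → ℂ, MemLp v 2 M →
      Summable (fun n : ℕ => ‖∫ μ, v μ * (μ : ℂ) ^ n ∂M‖ ^ 2) →
      (M {(1 : ℝ)}).toReal ≤ ∫ μ, ‖u μ - v μ‖ ^ 2 ∂M := by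
  subst hu
  have hmeas1 : MeasurableSet ({(1 : ℝ)} : Set ℝ) := measurableSet_singleton 1
  have huMem : MemLp (Set.indicator {(1 : ℝ)} (fun _ => (1 : ℂ))) 2 M :=
    memLp_indicator_const 2 hmeas1 1 (Or.inr (measure_ne_top M _))
  refine ⟨huMem, ?_⟩
  intro v hv hsum
  have hae : ∀ᵐ μ ∂M, μ ∈ Icc (-1 : ℝ) 1 := by
    rw [ae_iff]
    exact hsupp
  have hvi : Integrable v M := hv.integrable (by norm_num)
  set F : ℕ → ℂ := fun n => ∫ μ, v μ * (μ : ℂ) ^ n ∂M with hF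
  -- key computation of the limit integrals
  have key : ∀ c d : ℂ,
      (∫ μ, v μ * (if μ = (1 : ℝ) then c else if μ = (-1 : ℝ) then d else 0) ∂M)
        = (M {(1 : ℝ)}).toReal • (v 1 * c) + (M {(-1 : ℝ)}).toReal • (v (-1) * d) := by
    intro c d
    have heq : (fun μ : ℝ => v μ * (if μ = (1 : ℝ) then c else if μ = (-1 : ℝ) then d else 0))
        = fun μ : ℝ => Set.indicator {(1 : ℝ)} (fun _ => v 1 * c) μ
            + Set.indicator {(-1 : ℝ)} (fun _ => v (-1) * d) μ := by
      funext μ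
      by_cases h1' : μ = 1
      · subst h1'; norm_num
      · by_cases h2' : μ = -1
        · subst h2'; norm_num
        · simp [h1', h2']
    rw [heq, integral_add ((integrable_const _).indicator hmeas1)
        ((integrable_const _).indicator (measurableSet_singleton _)),
      integral_indicator_const _ hmeas1, integral_indicator_const _ (measurableSet_singleton _)]
    rfl
  -- moments tend to 0
  have h0 : Tendsto F atTop (𝓝 0) := by
    rw [tendsto_zero_iff_norm_tendsto_zero]
    have hs := hsum.tendsto_atTop_zero
    have : Tendsto (fun n => Real.sqrt (‖F n‖ ^ 2)) atTop (𝓝 (Real.sqrt 0)) :=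
      (Real.continuous_sqrt.tendsto 0).comp hs
    simpa [Real.sqrt_sq (norm_nonneg _)] using this
  -- dominated convergence for subsequences
  have dct : ∀ (k : ℕ → ℕ) (e : ℝ → ℂ),
      (∀ μ ∈ Icc (-1 : ℝ) 1, Tendsto (fun n => v μ * (μ : ℂ) ^ (k n)) atTop (𝓝 (v μ * e μ))) →
      Tendsto (fun n => F (k n)) atTop (𝓝 (∫ μ, v μ * e μ ∂M)) := by
    intro k e hlim
    apply tendsto_integral_of_dominated_convergence (fun μ => ‖v μ‖)
    · intro n
      exact hv.aestronglyMeasurable.mul (Complex.continuous_ofReal.pow _).aestronglyMeasurable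
    · exact hvi.norm
    · intro n
      filter_upwards [hae] with μ hμ
      rw [norm_mul]
      have h1le : ‖(μ : ℂ)‖ ≤ 1 := by
        rw [Complex.norm_real, Real.norm_eq_abs]
        exact abs_le.mpr ⟨hμ.1, hμ.2⟩
      have : ‖(μ : ℂ) ^ (k n)‖ ≤ 1 := by
        rw [norm_pow]; exact pow_le_one₀ (norm_nonneg _) h1le
      calc ‖v μ‖ * ‖(μ : ℂ) ^ (k n)‖ ≤ ‖v μ‖ * 1 :=
            mul_le_mul_of_nonneg_left this (norm_nonneg _)
        _ = ‖v μ‖ := mul_one _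
    · filter_upwards [hae] with μ hμ
      exact hlim μ hμ
  -- even subsequence
  have heven : Tendsto (fun n => F (2 * n)) atTop
      (𝓝 (∫ μ, v μ * (if μ = (1 : ℝ) then (1 : ℂ) else if μ = (-1 : ℝ) then 1 else 0) ∂M)) := by
    apply dct
    intro μ hμ
    rcases eq_or_ne μ 1 with h | h
    · subst h; simpa using tendsto_const_nhds
    rcases eq_or_ne μ (-1) with h' | h'
    · subst h'
      have : ∀ n : ℕ, (((-1 : ℝ) : ℂ)) ^ (2 * n) = 1 := by
        intro n
        rw [pow_mul]
        norm_num
      simpa [this, h] using tendsto_const_nhds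
    · have habs : |μ| < 1 := by
        rcases lt_or_eq_of_le (abs_le.mpr ⟨hμ.1, hμ.2⟩) with hlt | heqq
        · exact hlt
        · rcases abs_eq (by norm_num : (0:ℝ) ≤ 1) |>.mp heqq with rfl | rfl
          · exact absurd rfl h
          · exact absurd rfl h'
      simp only [if_neg h, if_neg h', mul_zero]
      have hnorm : ‖(μ : ℂ)‖ < 1 := by rwa [Complex.norm_real, Real.norm_eq_abs]
      have hpow : Tendsto (fun n : ℕ => (μ : ℂ) ^ (2 * n)) atTop (𝓝 0) := by
        simp_rw [pow_mul]
        apply tendsto_pow_atTop_nhds_zero_of_norm_lt_one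
        rw [norm_pow]
        nlinarith [norm_nonneg ((μ:ℂ))]
      simpa using hpow.const_mul (v μ)
  -- odd subsequence
  have hodd : Tendsto (fun n => F (2 * n + 1)) atTop
      (𝓝 (∫ μ, v μ * (if μ = (1 : ℝ) then (1 : ℂ) else if μ = (-1 : ℝ) then -1 else 0) ∂M)) := by
    apply dct
    intro μ hμ
    rcases eq_or_ne μ 1 with h | h
    · subst h; simpa using tendsto_const_nhds
    rcases eq_or_ne μ (-1) with h' | h'
    · subst h'
      have : ∀ n : ℕ, (((-1 : ℝ) : ℂ)) ^ (2 * n + 1) = -1 := by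
        intro n
        rw [pow_succ, pow_mul]
        norm_num
      simp only [this, if_neg (by norm_num : (-1 : ℝ) ≠ 1), if_pos rfl]
      exact tendsto_const_nhds
    · have habs : |μ| < 1 := by
        rcases lt_or_eq_of_le (abs_le.mpr ⟨hμ.1, hμ.2⟩) with hlt | heqq
        · exact hlt
        · rcases abs_eq (by norm_num : (0:ℝ) ≤ 1) |>.mp heqq with rfl | rfl
          · exact absurd rfl h
          · exact absurd rfl h'
      simp only [if_neg h, if_neg h', mul_zero]
      have hnorm : ‖(μ : ℂ)‖ < 1 := by rwa [Complex.norm_real, Real.norm_eq_abs]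
      have hpow : Tendsto (fun n : ℕ => (μ : ℂ) ^ (2 * n + 1)) atTop (𝓝 0) := by
        simp_rw [pow_succ, pow_mul]
        have : Tendsto (fun n : ℕ => ((μ : ℂ) ^ 2) ^ n) atTop (𝓝 0) := by
          apply tendsto_pow_atTop_nhds_zero_of_norm_lt_one
          rw [norm_pow]
          nlinarith [norm_nonneg ((μ:ℂ))]
        simpa using this.mul_const ((μ : ℂ))
      simpa using hpow.const_mul (v μ)
  -- subsequences of F tend to 0
  have h2n : Tendsto (fun n : ℕ => 2 * n) atTop atTop :=
    StrictMono.tendsto_atTop (fun a b hab => by omega)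
  have h2n1 : Tendsto (fun n : ℕ => 2 * n + 1) atTop atTop :=
    StrictMono.tendsto_atTop (fun a b hab => by omega)
  have he0 := tendsto_nhds_unique heven (h0.comp h2n)
  have ho0 := tendsto_nhds_unique hodd (h0.comp h2n1)
  rw [key] at he0 ho0
  -- deduce v 1 = 0
  set m1 : ℝ := (M {(1 : ℝ)}).toReal with hm1
  set m2 : ℝ := (M {(-1 : ℝ)}).toReal with hm2
  have hm1pos : 0 < m1 := ENNReal.toReal_pos h1.ne' (measure_ne_top M _)
  have hv1 : v 1 = 0 := by
    have e1 : (m1 : ℂ) * v 1 + (m2 : ℂ) * v (-1) = 0 := by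
      rw [← he0]; simp [Complex.real_smul]
    have e2 : (m1 : ℂ) * v 1 - (m2 : ℂ) * v (-1) = 0 := by
      rw [← sub_eq_zero] at ho0 ⊢
      calc (m1 : ℂ) * v 1 - (m2 : ℂ) * v (-1) - 0
          = m1 • (v 1 * 1) + m2 • (v (-1) * (-1)) - 0 := by
            simp [Complex.real_smul]; ring
        _ = 0 := ho0
    have : (m1 : ℂ) * v 1 = 0 := by linear_combination (e1 + e2) / 2
    rcases mul_eq_zero.mp this with h | h
    · exact absurd (by exact_mod_cast h) hm1pos.ne'
    · exact h
  -- final inequality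
  have hw : MemLp (fun μ => Set.indicator {(1 : ℝ)} (fun _ => (1 : ℂ)) μ - v μ) 2 M :=
    huMem.sub hv
  have hint : Integrable (fun μ => ‖Set.indicator {(1 : ℝ)} (fun _ => (1 : ℂ)) μ - v μ‖ ^ 2) M := by
    have := hw.integrable_norm_rpow (by norm_num) (by norm_num)
    simpa [ENNReal.toReal_ofNat, Real.rpow_natCast,
      Real.rpow_two] using this
  have hset : (∫ μ in {(1 : ℝ)}, ‖Set.indicator {(1 : ℝ)} (fun _ => (1 : ℂ)) μ - v μ‖ ^ 2 ∂M)
      = m1 := by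
    rw [Measure.restrict_singleton, integral_smul_measure, integral_dirac]
    simp [hv1]
    rfl
  calc (M {(1 : ℝ)}).toReal
      = ∫ μ in {(1 : ℝ)}, ‖Set.indicator {(1 : ℝ)} (fun _ => (1 : ℂ)) μ - v μ‖ ^ 2 ∂M :=
        hset.symm
    _ ≤ ∫ μ, ‖Set.indicator {(1 : ℝ)} (fun _ => (1 : ℂ)) μ - v μ‖ ^ 2 ∂M :=
        setIntegral_le_integral hint (Eventually.of_forall fun μ => by positivity)
end
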